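/- arXiv:1905.05639 — 5 statements merged into one kernel-verified Lean document; each statement's English description precedes it below -/
import Mathlib

section
/- Let M ≥ 1 and G ≥ 2 be integers. Fix a group index g, a channel estimate ĥ ∈ ℂ^M, a noise power σ > 0, an SINR target τ ≥ 0, and a Hermitian positive definite matrix C ∈ ℂ^{M×M}; set ε = 1/√(λ_min(C)), where λ_min(C) is the smallest eigenvalue of C. Let w_1,…,w_G ∈ ℂ^M be beamforming vectors. If ε‖w_g‖₂ + √τ · √( Σ_{l≠g} ( |w_l^H ĥ| + ε‖w_l‖₂ )² + σ² ) ≤ |w_g^H ĥ|, then for every error vector e ∈ ℂ^M with e^H C e ≤ 1 one has |w_g^H (ĥ + e)|² ≥ τ · ( Σ_{l≠g} |w_l^H (ĥ + e)|² + σ² ). -/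
open scoped ComplexInnerProductSpace ComplexOrder

lemma aux_rayleigh {M : ℕ} (C : Matrix (Fin M) (Fin M) ℂ) (hC : C.PosDef)
    (x : EuclideanSpace ℂ (Fin M)) :
    (⨅ i, hC.isHermitian.eigenvalues i) * ‖x‖ ^ 2 ≤
      (⟪x, Matrix.toEuclideanLin C x⟫).re := by
  rcases Nat.eq_zero_or_pos M with hM | hM
  · subst hM
    have hx : x = 0 := Subsingleton.elim _ _
    simp [hx, Real.iInf_of_isEmpty]
  haveI : Nonempty (Fin M) := ⟨⟨0, hM⟩⟩
  set b := hC.isHermitian.eigenvectorBasis with hb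
  set lam := hC.isHermitian.eigenvalues with hlam
  have hTb : ∀ j, Matrix.toEuclideanLin C (b j) = (lam j : ℂ) • b j := by
    intro j
    have h := hC.isHermitian.mulVec_eigenvectorBasis j
    apply PiLp.ext; intro i
    have := congrFun h i
    simpa [Matrix.toEuclideanLin_apply] using this
  have hx : Matrix.toEuclideanLin C x = ∑ j, ((lam j : ℂ) * b.repr x j) • b j := by
    conv_lhs => rw [← b.sum_repr x]
    rw [map_sum]
    refine Finset.sum_congr rfl fun j _ => ?_
    rw [map_smul, hTb, smul_smul, mul_comm]
  have hinner : ⟪x, Matrix.toEuclideanLin C x⟫ =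
      ∑ j, (lam j : ℂ) * b.repr x j * starRingEnd ℂ (b.repr x j) := by
    rw [hx, inner_sum]
    congr 1; funext j
    rw [inner_smul_right]
    congr 1
    rw [b.repr_apply_apply]
    exact (inner_conj_symm x (b j)).symm
  have hre : (⟪x, Matrix.toEuclideanLin C x⟫).re =
      ∑ j, lam j * ‖b.repr x j‖ ^ 2 := by
    rw [hinner, Complex.re_sum]
    refine Finset.sum_congr rfl fun j _ => ?_
    rw [mul_assoc, Complex.mul_conj]
    simp [Complex.normSq_eq_norm_sq, ← Complex.ofReal_pow, ← Complex.ofReal_mul]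
  have hnorm : ‖x‖ ^ 2 = ∑ j, ‖b.repr x j‖ ^ 2 := by
    rw [← b.repr.norm_map x, EuclideanSpace.norm_eq]
    rw [Real.sq_sqrt (by positivity)]
  rw [hre, hnorm, Finset.mul_sum]
  refine Finset.sum_le_sum fun j _ => ?_
  have h1 : (⨅ i, lam i) ≤ lam j := ciInf_le (Finite.bddBelow_range _) j
  have h2 : (0:ℝ) ≤ ‖b.repr x j‖ ^ 2 := by positivity
  exact mul_le_mul_of_nonneg_right h1 h2


/-- If the conservative robust constraint
`ε‖w_g‖ + √τ·√(∑_{l≠g} (|w_lᴴĥ| + ε‖w_l‖)² + σ²) ≤ |w_gᴴĥ|` holds with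
`ε = 1/√(λ_min C)`, then for every error `e` with `eᴴ C e ≤ 1` the SINR of the
user is at least `τ`, i.e. `|w_gᴴ(ĥ+e)|² ≥ τ·(∑_{l≠g} |w_lᴴ(ĥ+e)|² + σ²)`. -/
theorem stmt_0 {M G : ℕ} (hM : 1 ≤ M) (hG : 2 ≤ G) (g : Fin G)
    (hhat : EuclideanSpace ℂ (Fin M)) (σ τ : ℝ) (hσ : 0 < σ) (hτ : 0 ≤ τ)
    (C : Matrix (Fin M) (Fin M) ℂ) (hC : C.PosDef)
    (ε : ℝ) (hε : ε = 1 / Real.sqrt (⨅ i, hC.isHermitian.eigenvalues i))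
    (w : Fin G → EuclideanSpace ℂ (Fin M))
    (hcons : ε * ‖w g‖ +
        Real.sqrt τ * Real.sqrt ((∑ l ∈ Finset.univ.erase g,
          (‖⟪w l, hhat⟫‖ + ε * ‖w l‖) ^ 2) + σ ^ 2)
        ≤ ‖⟪w g, hhat⟫‖) :
    ∀ e : EuclideanSpace ℂ (Fin M), (⟪e, Matrix.toEuclideanLin C e⟫).re ≤ 1 →
      τ * ((∑ l ∈ Finset.univ.erase g, ‖⟪w l, hhat + e⟫‖ ^ 2) + σ ^ 2)
        ≤ ‖⟪w g, hhat + e⟫‖ ^ 2 := by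
  intro e he
  haveI : Nonempty (Fin M) := ⟨⟨0, hM⟩⟩
  set lam := hC.isHermitian.eigenvalues with hlam
  have hlmin_pos : 0 < ⨅ i, lam i := by
    obtain ⟨j, hj⟩ := exists_eq_ciInf_of_finite (f := lam)
    rw [← hj]
    exact hC.eigenvalues_pos j
  have hε_pos : 0 < ε := by
    rw [hε]
    positivity
  -- bound on ‖e‖
  have hne : ‖e‖ ≤ ε := by
    have h1 := aux_rayleigh C hC e
    have h2 : ‖e‖ ^ 2 ≤ 1 / (⨅ i, lam i) := by
      rw [le_div_iff₀ hlmin_pos, mul_comm]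
      exact h1.trans he
    have h3 := Real.sqrt_le_sqrt h2
    rwa [Real.sqrt_sq (norm_nonneg e), one_div, Real.sqrt_inv, ← one_div, ← hε] at h3
  -- generic upper bound
  have hub : ∀ l, ‖⟪w l, hhat + e⟫‖ ≤ ‖⟪w l, hhat⟫‖ + ε * ‖w l‖ := by
    intro l
    have h1 : (⟪w l, hhat + e⟫ : ℂ) = ⟪w l, hhat⟫ + ⟪w l, e⟫ := inner_add_right _ _ _
    calc ‖⟪w l, hhat + e⟫‖ ≤ ‖⟪w l, hhat⟫‖ + ‖⟪w l, e⟫‖ := by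
          rw [h1]; exact norm_add_le _ _
      _ ≤ ‖⟪w l, hhat⟫‖ + ε * ‖w l‖ := by
          gcongr
          calc ‖⟪w l, e⟫‖ = ‖(⟪w l, e⟫ : ℂ)‖ := rfl
            _ ≤ ‖w l‖ * ‖e‖ := norm_inner_le_norm _ _
            _ ≤ ‖w l‖ * ε := by gcongr
            _ = ε * ‖w l‖ := mul_comm _ _
  set S : ℝ := (∑ l ∈ Finset.univ.erase g,
      (‖⟪w l, hhat⟫‖ + ε * ‖w l‖) ^ 2) + σ ^ 2 with hS
  have hS_nonneg : 0 ≤ S :=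
    add_nonneg (Finset.sum_nonneg fun l _ => sq_nonneg _) (sq_nonneg σ)
  have hsum : (∑ l ∈ Finset.univ.erase g, ‖⟪w l, hhat + e⟫‖ ^ 2) + σ ^ 2 ≤ S := by
    rw [hS]
    gcongr with l hl
    exact hub l
  -- lower bound on the signal
  have hlb : Real.sqrt τ * Real.sqrt S ≤ ‖⟪w g, hhat + e⟫‖ := by
    have h1 : ‖⟪w g, hhat⟫‖ ≤ ‖⟪w g, hhat + e⟫‖ + ε * ‖w g‖ := by
      have h2 : (⟪w g, hhat⟫ : ℂ) = ⟪w g, hhat + e⟫ - ⟪w g, e⟫ := by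
        rw [inner_add_right]; ring
      calc ‖⟪w g, hhat⟫‖
          ≤ ‖⟪w g, hhat + e⟫‖ + ‖⟪w g, e⟫‖ := by
            rw [h2]
            simpa using
              norm_sub_le (⟪w g, hhat + e⟫ : ℂ) (⟪w g, e⟫ : ℂ)
        _ ≤ ‖⟪w g, hhat + e⟫‖ + ε * ‖w g‖ := by
            gcongr
            calc ‖⟪w g, e⟫‖ = ‖(⟪w g, e⟫ : ℂ)‖ := rfl
              _ ≤ ‖w g‖ * ‖e‖ := norm_inner_le_norm _ _
              _ ≤ ‖w g‖ * ε := by gcongr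
              _ = ε * ‖w g‖ := mul_comm _ _
    linarith [hcons]
  calc τ * ((∑ l ∈ Finset.univ.erase g, ‖⟪w l, hhat + e⟫‖ ^ 2) + σ ^ 2)
      ≤ τ * S := by gcongr
    _ = (Real.sqrt τ * Real.sqrt S) ^ 2 := by
        rw [mul_pow, Real.sq_sqrt hτ, Real.sq_sqrt hS_nonneg]
    _ ≤ ‖⟪w g, hhat + e⟫‖ ^ 2 := by
        exact pow_le_pow_left₀ (mul_nonneg (Real.sqrt_nonneg _) (Real.sqrt_nonneg _)) hlb 2
end

section
/- Let w, ĥ ∈ ℂ^M with w ≠ 0 and w^H ĥ ≠ 0, and let μ > 0. Define e = −μ · e^{i·arg(w^H ĥ)} · w / ‖w‖₂, where arg(w^H ĥ) is the argument of the complex number w^H ĥ. Then ‖e‖₂ = μ and |w^H (ĥ + e)| = | |w^H ĥ| − μ‖w‖₂ |; in particular, if |w^H ĥ| ≥ μ‖w‖₂, then |w^H (ĥ + e)| = |w^H ĥ| − μ‖w‖₂. -/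
open scoped ComplexInnerProductSpace

/-- The error vector `e = −μ·e^{i·arg(wᴴĥ)}·w/‖w‖` has norm `μ` and
achieves `|wᴴ(ĥ+e)| = | |wᴴĥ| − μ‖w‖ |`; in particular, if `|wᴴĥ| ≥ μ‖w‖` then
`|wᴴ(ĥ+e)| = |wᴴĥ| − μ‖w‖`. -/
theorem stmt_5 {M : ℕ} (w hhat : EuclideanSpace ℂ (Fin M)) (hw : w ≠ 0)
    (hwh : ⟪w, hhat⟫ ≠ 0) (μ : ℝ) (hμ : 0 < μ)
    (e : EuclideanSpace ℂ (Fin M))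
    (he : e = (-(μ : ℂ) * (⟪w, hhat⟫ / (‖⟪w, hhat⟫‖ : ℂ)) / (‖w‖ : ℂ)) • w) :
    ‖e‖ = μ ∧
    ‖⟪w, hhat + e⟫‖ = |‖⟪w, hhat⟫‖ - μ * ‖w‖| ∧
    (μ * ‖w‖ ≤ ‖⟪w, hhat⟫‖ →
      ‖⟪w, hhat + e⟫‖ = ‖⟪w, hhat⟫‖ - μ * ‖w‖) := by
  set z := ⟪w, hhat⟫ with hz
  have hwn : ‖w‖ ≠ 0 := norm_ne_zero_iff.mpr hw
  have ha : (‖z‖ : ℝ) ≠ 0 := norm_ne_zero_iff.mpr hwh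
  have habs : ‖(-(μ : ℂ) * (z / (‖z‖ : ℂ)) / (‖w‖ : ℂ))‖ = μ / ‖w‖ := by
    simp [norm_div, norm_mul, Complex.norm_real, abs_of_pos hμ, abs_of_nonneg (norm_nonneg w)]
    field_simp
  have hne : ‖e‖ = μ := by
    rw [he, norm_smul]
    rw [habs]
    field_simp
  have hinner : ⟪w, hhat + e⟫ = z * ((‖z‖ : ℂ) - μ * ‖w‖) / (‖z‖ : ℂ) := by
    rw [he, inner_add_right, inner_smul_right]
    have hww : ⟪w, w⟫ = ((‖w‖ : ℂ))^2 := by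
      rw [@inner_self_eq_norm_sq_to_K ℂ]; norm_cast
    rw [hww, ← hz]
    have hwc : (‖w‖ : ℂ) ≠ 0 := by exact_mod_cast hwn
    have hac : ((‖z‖ : ℝ) : ℂ) ≠ 0 := by exact_mod_cast ha
    field_simp
    ring
  have h2 : ‖⟪w, hhat + e⟫‖ = |‖z‖ - μ * ‖w‖| := by
    rw [hinner, norm_div, norm_mul]
    have : ‖((‖z‖ : ℂ) - (μ * ‖w‖ : ℝ))‖ = |‖z‖ - μ * ‖w‖| := by
      rw [← Complex.ofReal_sub]
      rw [Complex.norm_real, Real.norm_eq_abs]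
    push_cast at this ⊢
    rw [this, Complex.norm_real, Real.norm_eq_abs, abs_of_nonneg (norm_nonneg z)]
    field_simp
  refine ⟨hne, h2, fun hle => ?_⟩
  rw [h2, abs_of_nonneg (by linarith)]
end

section
/- Let w, ĥ ∈ ℂ^M and μ > 0. Then the infimum of |w^H (ĥ + e)| over all e ∈ ℂ^M with ‖e‖₂ ≤ μ equals max( |w^H ĥ| − μ‖w‖₂, 0 ), and this infimum is attained. -/
open scoped ComplexInnerProductSpace

/-- The infimum of `|wᴴ(ĥ+e)|` over `‖e‖ ≤ μ` equals
`max(|wᴴĥ| − μ‖w‖, 0)`, and it is attained. -/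
theorem stmt_6 {M : ℕ} (w hhat : EuclideanSpace ℂ (Fin M)) (μ : ℝ) (hμ : 0 < μ) :
    IsLeast {r : ℝ | ∃ e : EuclideanSpace ℂ (Fin M), ‖e‖ ≤ μ ∧
        r = ‖⟪w, hhat + e⟫‖}
      (max (‖⟪w, hhat⟫‖ - μ * ‖w‖) 0) := by
  constructor
  · -- membership: construct attaining e
    by_cases hw : w = 0
    · refine ⟨0, by simpa using hμ.le, ?_⟩
      simp [hw]
    · set a : ℂ := ⟪w, hhat⟫ with ha
      set nw : ℝ := ‖w‖ with hnw
      have hnw0 : 0 < nw := norm_pos_iff.mpr hw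
      set c : ℂ := if a = 0 then 1 else a / (‖a‖ : ℂ) with hc
      have hcabs : ‖c‖ = 1 := by
        by_cases h0 : a = 0
        · simp [hc, h0]
        · rw [hc, if_neg h0, norm_div, Complex.norm_real, norm_norm,
            div_self (norm_ne_zero_iff.mpr h0)]
      have hac : a = (‖a‖ : ℂ) * c := by
        by_cases h0 : a = 0
        · simp [h0]
        · rw [hc, if_neg h0]
          have : (‖a‖ : ℂ) ≠ 0 := by
            exact_mod_cast norm_ne_zero_iff.mpr h0
          field_simp
      set s : ℝ := min μ (‖a‖ / nw) with hs
      have hs0 : 0 ≤ s := le_min hμ.le (div_nonneg (norm_nonneg a) hnw0.le)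
      refine ⟨((-(s / nw) : ℝ) * c : ℂ) • w, ?_, ?_⟩
      · rw [norm_smul]
        have : ‖((-(s / nw) : ℝ) * c : ℂ)‖ = s / nw := by
          rw [norm_mul]
          simp only [Complex.norm_real, Real.norm_eq_abs, hcabs, mul_one]
          rw [abs_neg, abs_of_nonneg (div_nonneg hs0 hnw0.le)]
        rw [this, ← hnw, div_mul_cancel₀ _ hnw0.ne']
        exact min_le_left _ _
      · rw [inner_add_right, inner_smul_right, ← ha]
        have hww : ⟪w, w⟫ = ((nw ^ 2 : ℝ) : ℂ) := by
          rw [inner_self_eq_norm_sq_to_K]; norm_num; rfl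
        rw [hww]
        have key : a + ((-(s / nw) : ℝ) * c : ℂ) * ((nw ^ 2 : ℝ) : ℂ)
            = ((‖a‖ - s * nw : ℝ) : ℂ) * c := by
          conv_lhs => rw [hac]
          have hnwC : (nw : ℂ) ≠ 0 := by exact_mod_cast hnw0.ne'
          have h4 : ((‖a‖ : ℝ) : ℂ) + ((-(s / nw) : ℝ) : ℂ) * ((nw ^ 2 : ℝ) : ℂ)
              = ((‖a‖ - s * nw : ℝ) : ℂ) := by
            push_cast
            field_simp
            ring
          calc (‖a‖ : ℂ) * c + ((-(s / nw) : ℝ) * c : ℂ) * ((nw ^ 2 : ℝ) : ℂ)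
              = (((‖a‖ : ℝ) : ℂ) + ((-(s / nw) : ℝ) : ℂ) * ((nw ^ 2 : ℝ) : ℂ)) * c := by
                ring
            _ = ((‖a‖ - s * nw : ℝ) : ℂ) * c := by rw [h4]
        rw [key, norm_mul, hcabs, mul_one]
        rw [Complex.norm_real, Real.norm_eq_abs]
        have hsnw : s * nw = min (μ * nw) ‖a‖ := by
          rw [hs, min_mul_of_nonneg _ _ hnw0.le, div_mul_cancel₀ _ hnw0.ne']
        rw [hsnw]
        rcases le_total (μ * nw) ‖a‖ with h | h
        · rw [min_eq_left h, abs_of_nonneg (by linarith), max_eq_left (by nlinarith),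
            mul_comm μ nw]
        · rw [min_eq_right h, sub_self, abs_zero, max_eq_right (by nlinarith)]
  · rintro r ⟨e, he, rfl⟩
    apply max_le
    · have h1 : ‖⟪w, hhat⟫‖ ≤ ‖⟪w, hhat + e⟫‖ + ‖⟪w, e⟫‖ := by
        have : ⟪w, hhat⟫ = ⟪w, hhat + e⟫ - ⟪w, e⟫ := by
          rw [inner_add_right]; ring
        rw [this, sub_eq_add_neg]
        exact (norm_add_le _ _).trans (by rw [norm_neg])
      have h2 : ‖⟪w, e⟫‖ ≤ ‖w‖ * ‖e‖ := by
        exact norm_inner_le_norm w e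
      have h3 : ‖w‖ * ‖e‖ ≤ μ * ‖w‖ := by
        rw [mul_comm]
        exact mul_le_mul_of_nonneg_right he (norm_nonneg w) |>.trans_eq rfl
      linarith
    · exact norm_nonneg _
end

section
/- Let w, ĥ ∈ ℂ^M and μ > 0. Then the supremum of |w^H (ĥ + e)| over all e ∈ ℂ^M with ‖e‖₂ ≤ μ equals |w^H ĥ| + μ‖w‖₂, and this supremum is attained. -/
open scoped ComplexInnerProductSpace

/-- The supremum of `|wᴴ(ĥ+e)|` over `‖e‖ ≤ μ` equals
`|wᴴĥ| + μ‖w‖`, and it is attained. -/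
theorem stmt_7 {M : ℕ} (w hhat : EuclideanSpace ℂ (Fin M)) (μ : ℝ) (hμ : 0 < μ) :
    IsGreatest {r : ℝ | ∃ e : EuclideanSpace ℂ (Fin M), ‖e‖ ≤ μ ∧
        r = ‖⟪w, hhat + e⟫‖}
      (‖⟪w, hhat⟫‖ + μ * ‖w‖) := by
  constructor
  · by_cases hw : w = 0
    · refine ⟨0, by simpa using hμ.le, ?_⟩
      simp [hw]
    · have hwn : (0:ℝ) < ‖w‖ := norm_pos_iff.mpr hw
      set a := (⟪w, hhat⟫ : ℂ) with ha
      set c : ℂ := if a = 0 then 1 else a / ‖a‖ with hc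
      have hcabs : ‖c‖ = 1 := by
        by_cases h : a = 0
        · simp [hc, h]
        · simp [hc, h, norm_div, Complex.norm_real,
            abs_of_nonneg (norm_nonneg a),
            div_self (norm_ne_zero_iff.mpr h)]
      have hac : a = (‖a‖ : ℂ) * c := by
        by_cases h : a = 0
        · simp [h]
        · have : (‖a‖ : ℂ) ≠ 0 := by
            exact_mod_cast norm_ne_zero_iff.mpr h
          rw [hc, if_neg h]; field_simp
      refine ⟨((↑(μ / ‖w‖) : ℂ) * c) • w, ?_, ?_⟩
      · rw [norm_smul]
        have : ‖(↑(μ / ‖w‖) : ℂ) * c‖ = μ / ‖w‖ := by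
          rw [norm_mul, Complex.norm_real]
          simp [hcabs, abs_of_nonneg (le_of_lt (div_pos hμ hwn)), abs_of_pos hμ]
        rw [this]
        rw [div_mul_cancel₀ _ hwn.ne']
      · rw [inner_add_right, inner_smul_right]
        have hww : (⟪w, w⟫ : ℂ) = (‖w‖ : ℂ) ^ 2 := by
          rw [inner_self_eq_norm_sq_to_K]; norm_cast
        rw [hww]
        have h2 : ((μ / ‖w‖ : ℝ) : ℂ) * (‖w‖ : ℂ) ^ 2 = ((μ * ‖w‖ : ℝ) : ℂ) := by
          have hwC : (‖w‖ : ℂ) ≠ 0 := by exact_mod_cast hwn.ne'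
          push_cast
          field_simp
        have key : a + (↑(μ / ‖w‖) : ℂ) * c * (‖w‖ : ℂ) ^ 2
            = c * ((‖a‖ : ℂ) + (μ * ‖w‖ : ℝ)) := by
          conv_lhs => rw [hac]
          linear_combination c * h2
        rw [← ha, key, norm_mul, hcabs, one_mul]
        have hnn : (0:ℝ) ≤ ‖a‖ + μ * ‖w‖ := by positivity
        rw [show ((‖a‖ : ℂ) + ((μ * ‖w‖ : ℝ) : ℂ)) = (((‖a‖ + μ * ‖w‖ : ℝ)) : ℂ) by push_cast; ring]
        rw [Complex.norm_real, Real.norm_of_nonneg hnn]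
  · rintro r ⟨e, he, rfl⟩
    rw [inner_add_right]
    calc ‖(⟪w, hhat⟫ + ⟪w, e⟫)‖
        ≤ ‖⟪w, hhat⟫‖ + ‖⟪w, e⟫‖ := norm_add_le _ _
      _ ≤ ‖⟪w, hhat⟫‖ + μ * ‖w‖ := by
          gcongr
          calc ‖⟪w, e⟫‖ = ‖(⟪w, e⟫ : ℂ)‖ := rfl
            _ ≤ ‖w‖ * ‖e‖ := norm_inner_le_norm w e
            _ ≤ ‖w‖ * μ := by gcongr
            _ = μ * ‖w‖ := mul_comm _ _
end

section
/- Let M ≥ 1 and G ≥ 1 be integers. Fix a group index g ∈ {1,…,G}, a channel estimate ĥ ∈ ℂ^M, a point u ∈ ℂ^M with u^H ĥ ≠ 0, real numbers ε ≥ 0, τ ≥ 0, σ ∈ ℝ. Then the function F : (ℂ^M)^G → ℝ defined by F(w_1,…,w_G) = ε‖w_g‖₂ + √τ · √( Σ_{l≠g} ( |w_l^H ĥ| + ε‖w_l‖₂ )² + σ² ) − Re( u^H ĥ · ĥ^H w_g ) / |u^H ĥ| is convex, where (ℂ^M)^G is regarded as a real vector space. In particular, the constraint set { (w_1,…,w_G)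 : F(w_1,…,w_G) ≤ s } is convex for every s ∈ ℝ. -/
open scoped ComplexInnerProductSpace


lemma key_minkowski {ι : Type*} [Fintype ι] [DecidableEq ι] (s : Finset ι) (a b σ : ℝ)
    (ha : 0 ≤ a) (hb : 0 ≤ b) (hab : a + b = 1) (p q : ι → ℝ) :
    Real.sqrt ((∑ i ∈ s, (a * p i + b * q i) ^ 2) + σ ^ 2) ≤
      a * Real.sqrt ((∑ i ∈ s, p i ^ 2) + σ ^ 2) +
        b * Real.sqrt ((∑ i ∈ s, q i ^ 2) + σ ^ 2) := by
  classical
  set mk : (ι → ℝ) → EuclideanSpace ℝ (ι ⊕ Unit) := fun r =>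
    (WithLp.equiv 2 (ι ⊕ Unit → ℝ)).symm
      (Sum.elim (fun i => if i ∈ s then r i else 0) (fun _ => σ)) with hmk
  have norm_eq : ∀ (r : ι → ℝ), ‖mk r‖ = Real.sqrt ((∑ i ∈ s, r i ^ 2) + σ ^ 2) := by
    intro r
    rw [hmk, EuclideanSpace.norm_eq]
    congr 1
    rw [Fintype.sum_sum_type]
    simp only [WithLp.equiv_symm_apply, WithLp.ofLp_toLp, PiLp.toLp_apply, Sum.elim_inl, Sum.elim_inr, Real.norm_eq_abs, sq_abs]
    congr 1
    · have he : ∀ x, (if x ∈ s then r x else 0) ^ 2 = if x ∈ s then r x ^ 2 else 0 := by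
        intro x; split <;> simp
      simp only [he, Finset.sum_ite_mem, Finset.univ_inter]
    · simp
  have hcomb : a • mk p + b • mk q = mk (fun i => a * p i + b * q i) := by
    rw [hmk]
    ext j
    cases j with
    | inl i =>
        simp only [PiLp.add_apply, PiLp.smul_apply, WithLp.equiv_symm_apply, WithLp.ofLp_toLp, PiLp.toLp_apply, Sum.elim_inl,
          smul_eq_mul]
        split <;> simp
    | inr _ =>
        simp only [PiLp.add_apply, PiLp.smul_apply, WithLp.equiv_symm_apply, WithLp.ofLp_toLp, PiLp.toLp_apply, Sum.elim_inr,
          smul_eq_mul]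
        rw [← add_mul, hab, one_mul]
  have h1 : ‖a • mk p + b • mk q‖ ≤ a * ‖mk p‖ + b * ‖mk q‖ := by
    calc ‖a • mk p + b • mk q‖ ≤ ‖a • mk p‖ + ‖b • mk q‖ := norm_add_le _ _
    _ = a * ‖mk p‖ + b * ‖mk q‖ := by
        rw [norm_smul, norm_smul, Real.norm_eq_abs, Real.norm_eq_abs,
          abs_of_nonneg ha, abs_of_nonneg hb]
  rw [hcomb, norm_eq, norm_eq, norm_eq] at h1
  exact h1

lemma key_mono {ι : Type*} (s : Finset ι) (σ : ℝ) (r t : ι → ℝ)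
    (h0 : ∀ i ∈ s, 0 ≤ r i) (h : ∀ i ∈ s, r i ≤ t i) :
    Real.sqrt ((∑ i ∈ s, r i ^ 2) + σ ^ 2) ≤ Real.sqrt ((∑ i ∈ s, t i ^ 2) + σ ^ 2) := by
  apply Real.sqrt_le_sqrt
  apply add_le_add_left
  exact Finset.sum_le_sum fun i hi => pow_le_pow_left₀ (h0 i hi) (h i hi) 2

/-- The MM surrogate constraint function
`F(w) = ε‖w_g‖ + √τ·√(∑_{l≠g} (|w_lᴴĥ| + ε‖w_l‖)² + σ²) − Re(uᴴĥ·ĥᴴw_g)/|uᴴĥ|`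
is convex on `(ℂ^M)^G` as a real vector space, and its sublevel sets are convex. -/
theorem stmt_11 {M G : ℕ} (hM : 1 ≤ M) (hG : 1 ≤ G) (g : Fin G)
    (hhat u : EuclideanSpace ℂ (Fin M)) (hu : ⟪u, hhat⟫ ≠ 0)
    (ε τ σ : ℝ) (hε : 0 ≤ ε) (hτ : 0 ≤ τ) :
    ConvexOn ℝ Set.univ
      (fun w : Fin G → EuclideanSpace ℂ (Fin M) =>
        ε * ‖w g‖ + Real.sqrt τ * Real.sqrt ((∑ l ∈ Finset.univ.erase g,
            (‖⟪w l, hhat⟫‖ + ε * ‖w l‖) ^ 2) + σ ^ 2)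
          - (⟪u, hhat⟫ * ⟪hhat, w g⟫).re / ‖⟪u, hhat⟫‖) ∧
    ∀ s : ℝ, Convex ℝ {w : Fin G → EuclideanSpace ℂ (Fin M) |
        ε * ‖w g‖ + Real.sqrt τ * Real.sqrt ((∑ l ∈ Finset.univ.erase g,
            (‖⟪w l, hhat⟫‖ + ε * ‖w l‖) ^ 2) + σ ^ 2)
          - (⟪u, hhat⟫ * ⟪hhat, w g⟫).re / ‖⟪u, hhat⟫‖ ≤ s} := by
  have cvx : ConvexOn ℝ Set.univ
      (fun w : Fin G → EuclideanSpace ℂ (Fin M) =>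
        ε * ‖w g‖ + Real.sqrt τ * Real.sqrt ((∑ l ∈ Finset.univ.erase g,
            (‖⟪w l, hhat⟫‖ + ε * ‖w l‖) ^ 2) + σ ^ 2)
          - (⟪u, hhat⟫ * ⟪hhat, w g⟫).re / ‖⟪u, hhat⟫‖) := by
    refine ⟨convex_univ, ?_⟩
    intro x _ y _ a b ha hb hab
    simp only
    set c : ℂ := ⟪u, hhat⟫ with hc
    -- abbreviations
    set f : (Fin G → EuclideanSpace ℂ (Fin M)) → Fin G → ℝ :=
      fun w l => ‖⟪w l, hhat⟫‖ + ε * ‖w l‖ with hf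
    have happ : ∀ l : Fin G, (a • x + b • y) l = a • x l + b • y l := by
      intro l; simp
    have hfnonneg : ∀ w l, 0 ≤ f w l := by
      intro w l
      exact add_nonneg (norm_nonneg _) (mul_nonneg hε (norm_nonneg _))
    have hfle : ∀ l, f (a • x + b • y) l ≤ a * f x l + b * f y l := by
      intro l
      rw [hf]
      simp only [happ]
      have h1 : ⟪a • x l + b • y l, hhat⟫ = a • ⟪x l, hhat⟫ + b • ⟪y l, hhat⟫ := by
        rw [inner_add_left, RCLike.real_smul_eq_coe_smul (K := ℂ) a (x l),
          RCLike.real_smul_eq_coe_smul (K := ℂ) b (y l),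
          inner_smul_real_left, inner_smul_real_left]
      have h2 : ‖⟪a • x l + b • y l, hhat⟫‖ ≤
          a * ‖⟪x l, hhat⟫‖ + b * ‖⟪y l, hhat⟫‖ := by
        rw [h1]
        calc ‖(a • ⟪x l, hhat⟫ + b • ⟪y l, hhat⟫)‖
            ≤ ‖(a • ⟪x l, hhat⟫)‖ + ‖(b • ⟪y l, hhat⟫)‖ :=
              norm_add_le _ _
          _ = a * ‖⟪x l, hhat⟫‖ + b * ‖⟪y l, hhat⟫‖ := by
              rw [Complex.real_smul, Complex.real_smul, norm_mul, norm_mul,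
                Complex.norm_real, Complex.norm_real, Real.norm_eq_abs, Real.norm_eq_abs,
                abs_of_nonneg ha, abs_of_nonneg hb]
      have h3 : ‖a • x l + b • y l‖ ≤ a * ‖x l‖ + b * ‖y l‖ := by
        calc ‖a • x l + b • y l‖ ≤ ‖a • x l‖ + ‖b • y l‖ := norm_add_le _ _
          _ = a * ‖x l‖ + b * ‖y l‖ := by
              rw [norm_smul, norm_smul, Real.norm_eq_abs, Real.norm_eq_abs,
                abs_of_nonneg ha, abs_of_nonneg hb]
      have h4 : ε * ‖a • x l + b • y l‖ ≤ a * (ε * ‖x l‖) + b * (ε * ‖y l‖) := by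
        calc ε * ‖a • x l + b • y l‖ ≤ ε * (a * ‖x l‖ + b * ‖y l‖) := by
              exact mul_le_mul_of_nonneg_left h3 hε
          _ = a * (ε * ‖x l‖) + b * (ε * ‖y l‖) := by ring
      calc ‖⟪a • x l + b • y l, hhat⟫‖ + ε * ‖a • x l + b • y l‖
          ≤ (a * ‖⟪x l, hhat⟫‖ + b * ‖⟪y l, hhat⟫‖) +
            (a * (ε * ‖x l‖) + b * (ε * ‖y l‖)) := add_le_add h2 h4
        _ = a * (‖⟪x l, hhat⟫‖ + ε * ‖x l‖) +
            b * (‖⟪y l, hhat⟫‖ + ε * ‖y l‖) := by ring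
    -- term 1
    have hA : ε * ‖(a • x + b • y) g‖ ≤ a * (ε * ‖x g‖) + b * (ε * ‖y g‖) := by
      rw [happ g]
      calc ε * ‖a • x g + b • y g‖ ≤ ε * (‖a • x g‖ + ‖b • y g‖) :=
            mul_le_mul_of_nonneg_left (norm_add_le _ _) hε
        _ = a * (ε * ‖x g‖) + b * (ε * ‖y g‖) := by
            rw [norm_smul, norm_smul, Real.norm_eq_abs, Real.norm_eq_abs,
              abs_of_nonneg ha, abs_of_nonneg hb]; ring
    -- term 2
    have hB : Real.sqrt τ * Real.sqrt ((∑ l ∈ Finset.univ.erase g,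
          (f (a • x + b • y) l) ^ 2) + σ ^ 2) ≤
        a * (Real.sqrt τ * Real.sqrt ((∑ l ∈ Finset.univ.erase g, (f x l) ^ 2) + σ ^ 2)) +
        b * (Real.sqrt τ * Real.sqrt ((∑ l ∈ Finset.univ.erase g, (f y l) ^ 2) + σ ^ 2)) := by
      have step1 : Real.sqrt ((∑ l ∈ Finset.univ.erase g, (f (a • x + b • y) l) ^ 2) + σ ^ 2) ≤
          Real.sqrt ((∑ l ∈ Finset.univ.erase g, (a * f x l + b * f y l) ^ 2) + σ ^ 2) :=
        key_mono _ σ _ _ (fun l _ => hfnonneg _ l) (fun l _ => hfle l)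
      have step2 := key_minkowski (Finset.univ.erase g) a b σ ha hb hab (f x) (f y)
      calc Real.sqrt τ * Real.sqrt ((∑ l ∈ Finset.univ.erase g, (f (a • x + b • y) l) ^ 2) + σ ^ 2)
          ≤ Real.sqrt τ * (a * Real.sqrt ((∑ l ∈ Finset.univ.erase g, (f x l) ^ 2) + σ ^ 2) +
              b * Real.sqrt ((∑ l ∈ Finset.univ.erase g, (f y l) ^ 2) + σ ^ 2)) :=
            mul_le_mul_of_nonneg_left (le_trans step1 step2) (Real.sqrt_nonneg τ)
        _ = _ := by ring
    -- term 3
    have hC : (c * ⟪hhat, (a • x + b • y) g⟫).re / ‖c‖ =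
        a * ((c * ⟪hhat, x g⟫).re / ‖c‖) +
          b * ((c * ⟪hhat, y g⟫).re / ‖c‖) := by
      rw [happ g, inner_add_right, RCLike.real_smul_eq_coe_smul (K := ℂ) a (x g),
        RCLike.real_smul_eq_coe_smul (K := ℂ) b (y g),
        inner_smul_real_right, inner_smul_real_right, Complex.real_smul, Complex.real_smul]
      have : c * ((a : ℂ) * ⟪hhat, x g⟫ + (b : ℂ) * ⟪hhat, y g⟫) =
          (a : ℂ) * (c * ⟪hhat, x g⟫) + (b : ℂ) * (c * ⟪hhat, y g⟫) := by ring
      rw [this]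
      simp only [Complex.add_re, Complex.mul_re, Complex.ofReal_re, Complex.ofReal_im]
      ring
    have goal_eq : a * (ε * ‖x g‖ + Real.sqrt τ * Real.sqrt ((∑ l ∈ Finset.univ.erase g,
            (f x l) ^ 2) + σ ^ 2) - (c * ⟪hhat, x g⟫).re / ‖c‖) +
        b * (ε * ‖y g‖ + Real.sqrt τ * Real.sqrt ((∑ l ∈ Finset.univ.erase g,
            (f y l) ^ 2) + σ ^ 2) - (c * ⟪hhat, y g⟫).re / ‖c‖) =
        (a * (ε * ‖x g‖) + b * (ε * ‖y g‖)) +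
        (a * (Real.sqrt τ * Real.sqrt ((∑ l ∈ Finset.univ.erase g, (f x l) ^ 2) + σ ^ 2)) +
         b * (Real.sqrt τ * Real.sqrt ((∑ l ∈ Finset.univ.erase g, (f y l) ^ 2) + σ ^ 2))) -
        (a * ((c * ⟪hhat, x g⟫).re / ‖c‖) +
         b * ((c * ⟪hhat, y g⟫).re / ‖c‖)) := by ring
    show ε * ‖(a • x + b • y) g‖ + Real.sqrt τ * Real.sqrt ((∑ l ∈ Finset.univ.erase g,
        (f (a • x + b • y) l) ^ 2) + σ ^ 2)
        - (c * ⟪hhat, (a • x + b • y) g⟫).re / ‖c‖ ≤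
      a • (ε * ‖x g‖ + Real.sqrt τ * Real.sqrt ((∑ l ∈ Finset.univ.erase g,
        (f x l) ^ 2) + σ ^ 2) - (c * ⟪hhat, x g⟫).re / ‖c‖) +
      b • (ε * ‖y g‖ + Real.sqrt τ * Real.sqrt ((∑ l ∈ Finset.univ.erase g,
        (f y l) ^ 2) + σ ^ 2) - (c * ⟪hhat, y g⟫).re / ‖c‖)
    simp only [smul_eq_mul]
    rw [goal_eq, hC]
    exact sub_le_sub_right (add_le_add hA hB) _
  refine ⟨cvx, fun s => ?_⟩
  have := cvx.convex_le s
  rwa [Set.sep_univ] at this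
end
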